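/- For all real numbers k ≥ 1 and γ ≥ 1, one has k² · ( 1/γ − γ + √(γ²−1) )² ≤ 4 · (k² − 1/2) · (1 − 1/γ²). -/

import Mathlib

/-- Nonpositivity of the discriminant of the quadratic form appearing in
the proof of Theorem 5.1. -/
theorem stmt_4 (k γ : ℝ) (hk : 1 ≤ k) (hγ : 1 ≤ γ) :
    k ^ 2 * (1 / γ - γ + Real.sqrt (γ ^ 2 - 1)) ^ 2
      ≤ 4 * (k ^ 2 - 1 / 2) * (1 - 1 / γ ^ 2) := by
  have hγ0 : (0:ℝ) < γ := lt_of_lt_of_le one_pos hγ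
  set s := Real.sqrt (γ ^ 2 - 1) with hs
  have hs0 : 0 ≤ s := Real.sqrt_nonneg _
  have hs2 : s ^ 2 = γ ^ 2 - 1 := Real.sq_sqrt (by nlinarith)
  have hsγ : s ≤ γ := by
    have hle : (γ - s) ^ 2 ≤ 1 := by nlinarith
    nlinarith [mul_le_mul_of_nonneg_left hle (sq_nonneg k)]
  have ht : γ - s ≤ 1 := by nlinarith
  have hk0 : (1:ℝ) ≤ k ^ 2 := by nlinarith
  rw [div_sub' (ne_of_gt hγ0), one_sub_div (by positivity : γ^2 ≠ 0)]
  rw [div_add' _ _ _ (ne_of_gt hγ0)]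
  rw [div_pow, mul_div_assoc', mul_div_assoc', div_le_div_iff₀ (by positivity) (by positivity)]
  have heq : 1 - γ * γ + s * γ = s * (γ - s) := by linear_combination hs2
  have h0 : 0 ≤ γ - s := sub_nonneg.2 hsγ
  have key : k ^ 2 * (γ - s) ^ 2 ≤ 4 * (k ^ 2 - 1 / 2) := by
    have hle : (γ - s) ^ 2 ≤ 1 := by nlinarith
    nlinarith [mul_le_mul_of_nonneg_left hle (sq_nonneg k)]
  have hmul := mul_le_mul_of_nonneg_right key (show (0:ℝ) ≤ s ^ 2 * γ ^ 2 by positivity)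
  rw [heq, ← hs2]
  nlinarith [hmul]
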